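/- Let M be a compact metric space, φ:ℝ×M→M a continuous flow without fixed points, and ε₀(φ) = inf({τ>0 : ∃x∈M with φ_τ(x)=x and φ_t(x)≠x for all t∈(0,τ)} ∪ {1}). Then there exist constants μ∈(0, ε₀(φ)/3) and δ>0 such that for every x∈M and every continuous curve α:[0,1]→B_δ(x) with α(0)=x and α(t)∈Orb(x,φ) for all t∈[0,1], one has α(t)∈{φ_s(x) : s∈[−μ,μ]} for all t∈[0,1]. -/

import Mathlib

open Filter Topology Set

section Aux
variable {M : Type*} [MetricSpace M] [CompactSpace M] (φ : ℝ → M → M)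

lemma flow_per_neg (hφ0 : ∀ x, φ 0 x = x) (hφadd : ∀ t s x, φ (t + s) x = φ t (φ s x))
    {z : M} {s : ℝ} (hs : φ s z = z) : φ (-s) z = z := by
  calc φ (-s) z = φ (-s) (φ s z) := by rw [hs]
  _ = φ (-s + s) z := (hφadd _ _ _).symm
  _ = z := by rw [neg_add_cancel, hφ0]

lemma flow_per_int (hφ0 : ∀ x, φ 0 x = x) (hφadd : ∀ t s x, φ (t + s) x = φ t (φ s x))
    {z : M} {s : ℝ} (hs : φ s z = z) : ∀ k : ℤ, φ ((k : ℝ) * s) z = z := by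
  intro k
  induction k using Int.induction_on with
  | zero => simpa using hφ0 z
  | succ k ih =>
      push_cast at ih ⊢
      have h1 : ((k : ℝ) + 1) * s = s + (k : ℝ) * s := by ring
      rw [h1, hφadd, ih, hs]
  | pred k ih =>
      push_cast at ih ⊢
      have h1 : (-(k : ℝ) - 1) * s = -s + (-(k : ℝ)) * s := by ring
      rw [h1, hφadd, ih, flow_per_neg φ hφ0 hφadd hs]

lemma flow_small (hφcont : Continuous fun p : ℝ × M => φ p.1 p.2)
    (hφ0 : ∀ x, φ 0 x = x) :
    ∀ ε > 0, ∃ κ > 0, ∀ (r : ℝ) (w : M), |r| ≤ κ → dist (φ r w) w < ε := by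
  intro ε hε
  by_contra h
  push_neg at h
  choose r w hr hd using fun n : ℕ => h (1 / (n + 1)) (by positivity)
  have hmem : ∀ n, (r n, w n) ∈ (Set.Icc (-1 : ℝ) 1 ×ˢ (Set.univ : Set M)) := by
    intro n
    refine ⟨abs_le.mp ((hr n).trans ?_), trivial⟩
    rw [div_le_one (by positivity)]
    linarith [Nat.cast_nonneg (α := ℝ) n]
  obtain ⟨⟨r0, w0⟩, -, g, hg, hlim⟩ :=
    (isCompact_Icc.prod isCompact_univ).tendsto_subseq hmem
  have hrg : Tendsto (fun n => r (g n)) atTop (𝓝 r0) :=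
    (continuous_fst.tendsto _).comp hlim
  have hwg : Tendsto (fun n => w (g n)) atTop (𝓝 w0) :=
    (continuous_snd.tendsto _).comp hlim
  have hr00 : Tendsto (fun n => r (g n)) atTop (𝓝 0) := by
    have hb : ∀ n : ℕ, ‖r (g n)‖ ≤ 1 / (n + 1) := by
      intro n
      refine (hr (g n)).trans ?_
      have h1 : (n : ℝ) ≤ g n := (Nat.cast_le (α := ℝ)).mpr hg.le_apply
      apply one_div_le_one_div_of_le (by positivity) (by linarith)
    exact squeeze_zero_norm hb tendsto_one_div_add_atTop_nhds_zero_nat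
  have hr0 : r0 = 0 := tendsto_nhds_unique hrg hr00
  have hdist : Tendsto (fun n => dist (φ (r (g n)) (w (g n))) (w (g n))) atTop
      (𝓝 (dist (φ r0 w0) w0)) := by
    have hc : Continuous fun p : ℝ × M => dist (φ p.1 p.2) p.2 :=
      hφcont.dist continuous_snd
    exact (hc.tendsto _).comp hlim
  rw [hr0, hφ0, dist_self] at hdist
  have : ε ≤ 0 := ge_of_tendsto hdist (Eventually.of_forall fun n => hd (g n))
  linarith

end Aux

section Aux2
variable {M : Type*} [MetricSpace M] [CompactSpace M] (φ : ℝ → M → M)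

lemma flow_minper (hφcont : Continuous fun p : ℝ × M => φ p.1 p.2)
    (hφ0 : ∀ x, φ 0 x = x) (hφadd : ∀ t s x, φ (t + s) x = φ t (φ s x))
    {z : M} {s : ℝ} (hs0 : 0 < s) (hz : φ s z = z) (hnf : ∃ t, φ t z ≠ z) :
    ∃ p, 0 < p ∧ p ≤ s ∧ φ p z = z ∧ ∀ t ∈ Set.Ioo 0 p, φ t z ≠ z := by
  set P : AddSubgroup ℝ :=
    { carrier := {t : ℝ | φ t z = z}
      zero_mem' := hφ0 z
      add_mem' := by
        intro a b ha hb
        show φ (a + b) z = z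
        rw [hφadd, hb, ha]
      neg_mem' := by
        intro a ha
        exact flow_per_neg φ hφ0 hφadd ha } with hP
  have hPmem : ∀ t : ℝ, t ∈ P ↔ φ t z = z := fun t => Iff.rfl
  have hclosed : IsClosed (P : Set ℝ) := by
    have : (P : Set ℝ) = (fun t => φ t z) ⁻¹' {z} := by
      ext t; simp [hPmem]
    rw [this]
    exact IsClosed.preimage (hφcont.comp (continuous_id.prodMk continuous_const))
      isClosed_singleton
  rcases P.dense_or_cyclic with hd | ⟨a, ha⟩
  · exfalso
    have huniv : (P : Set ℝ) = Set.univ := by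
      rw [← hclosed.closure_eq]
      exact hd.closure_eq
    obtain ⟨t0, ht0⟩ := hnf
    exact ht0 (by have : t0 ∈ (P : Set ℝ) := huniv ▸ Set.mem_univ t0; exact this)
  · have hsP : s ∈ P := hz
    rw [ha, AddSubgroup.mem_closure_singleton] at hsP
    obtain ⟨n, hn⟩ := hsP
    have hane : a ≠ 0 := by
      rintro rfl
      rw [smul_zero] at hn
      exact absurd hn.symm (ne_of_gt hs0)
    have hnne : n ≠ 0 := by
      rintro rfl
      rw [zero_smul] at hn
      exact absurd hn.symm (ne_of_gt hs0)
    have haP : a ∈ P := by rw [ha]; exact AddSubgroup.subset_closure rfl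
    refine ⟨|a|, abs_pos.mpr hane, ?_, ?_, ?_⟩
    · have : |s| = |(n : ℝ)| * |a| := by
        rw [← abs_mul, ← zsmul_eq_mul, hn]
      have h1 : (1 : ℝ) ≤ |(n : ℝ)| := by
        have := Int.one_le_abs hnne
        calc (1:ℝ) = ((1:ℤ):ℝ) := by norm_num
        _ ≤ ((|n| : ℤ) : ℝ) := by exact_mod_cast this
        _ = |(n:ℝ)| := by push_cast; ring
      nlinarith [abs_of_pos hs0, abs_nonneg a, abs_nonneg (n:ℝ)]
    · rcases abs_choice a with h | h
      · rw [h]; exact haP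
      · rw [h]; exact flow_per_neg φ hφ0 hφadd haP
    · rintro t ⟨ht0, htp⟩ hcon
      have : t ∈ P := hcon
      rw [ha, AddSubgroup.mem_closure_singleton] at this
      obtain ⟨m, hm⟩ := this
      have hmne : m ≠ 0 := by
        rintro rfl
        rw [zero_smul] at hm
        exact absurd hm.symm (ne_of_gt ht0)
      have : |t| = |(m : ℝ)| * |a| := by rw [← abs_mul, ← zsmul_eq_mul, hm]
      have h1 : (1 : ℝ) ≤ |(m : ℝ)| := by
        have := Int.one_le_abs hmne
        calc (1:ℝ) = ((1:ℤ):ℝ) := by norm_num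
        _ ≤ ((|m| : ℤ) : ℝ) := by exact_mod_cast this
        _ = |(m:ℝ)| := by push_cast; ring
      have h2 : |a| ≤ |t| := by nlinarith [abs_nonneg a]
      rw [abs_of_pos ht0] at h2
      linarith

lemma flow_no_small_periods (hφcont : Continuous fun p : ℝ × M => φ p.1 p.2)
    (hφ0 : ∀ x, φ 0 x = x) (hφadd : ∀ t s x, φ (t + s) x = φ t (φ s x))
    (hnofix : ∀ x : M, ∃ t : ℝ, φ t x ≠ x) :
    ∃ m > 0, ∀ (z : M) (s : ℝ), 0 < s → s ≤ m → φ s z ≠ z := by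
  by_contra h
  push_neg at h
  choose z s hs0 hsm hsz using fun n : ℕ => h (1 / (n + 1)) (by positivity)
  obtain ⟨w, -, g, hg, hlim⟩ :=
    isCompact_univ.tendsto_subseq (x := z) (fun n => Set.mem_univ _)
  have hfix : ∀ t, φ t w = w := by
    intro t
    by_contra hne
    have hεpos : 0 < dist (φ t w) w := dist_pos.mpr hne
    set ε := dist (φ t w) w with hε
    obtain ⟨κ, hκpos, hκ⟩ := flow_small φ hφcont hφ0 (ε / 3) (by linarith)
    have hφt : Continuous (fun y : M => φ t y) :=
      hφcont.comp (Continuous.prodMk_right t)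
    have h1 : Tendsto (fun n => φ t (z (g n))) atTop (𝓝 (φ t w)) :=
      (hφt.tendsto w).comp hlim
    obtain ⟨N1, hN1⟩ := (Metric.tendsto_atTop.mp h1) (ε / 3) (by linarith)
    obtain ⟨N2, hN2⟩ := (Metric.tendsto_atTop.mp hlim) (ε / 3) (by linarith)
    obtain ⟨N3, hN3⟩ : ∃ N3 : ℕ, (1 : ℝ) / (N3 + 1) ≤ κ := by
      obtain ⟨N3, hN3⟩ := exists_nat_one_div_lt hκpos
      exact ⟨N3, le_of_lt hN3⟩
    set n := max N1 (max N2 N3) with hn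
    set zn := z (g n) with hzn
    set sn := s (g n) with hsn
    have hsnκ : sn ≤ κ := by
      refine (hsm (g n)).trans ?_
      refine le_trans ?_ hN3
      have h1 : (N3 : ℝ) ≤ g n := by
        have : N3 ≤ n := le_trans (le_max_right _ _) (le_max_right _ _)
        exact_mod_cast this.trans hg.le_apply
      apply one_div_le_one_div_of_le (by positivity) (by linarith)
    set r := t - (⌊t / sn⌋ : ℝ) * sn with hr
    have hsnpos : 0 < sn := hs0 (g n)
    have hr0 : 0 ≤ r := by
      have := Int.floor_le (t / sn)
      have h2 : (⌊t / sn⌋ : ℝ) * sn ≤ (t / sn) * sn := by nlinarith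
      rw [div_mul_cancel₀ t (ne_of_gt hsnpos)] at h2
      rw [hr]
      linarith
    have hrs : r < sn := by
      have := Int.lt_floor_add_one (t / sn)
      have h2 : (t / sn) * sn < ((⌊t / sn⌋ : ℝ) + 1) * sn := by nlinarith
      rw [div_mul_cancel₀ t (ne_of_gt hsnpos)] at h2
      rw [hr]
      nlinarith
    have hperk : φ ((⌊t / sn⌋ : ℝ) * sn) zn = zn :=
      flow_per_int φ hφ0 hφadd (hsz (g n)) ⌊t / sn⌋
    have hts : φ t zn = φ r zn := by
      have h3 : t = r + (⌊t / sn⌋ : ℝ) * sn := by rw [hr]; ring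
      calc φ t zn = φ (r + (⌊t / sn⌋ : ℝ) * sn) zn := by rw [← h3]
      _ = φ r (φ ((⌊t / sn⌋ : ℝ) * sn) zn) := hφadd _ _ _
      _ = φ r zn := by rw [hperk]
    have hd2 : dist (φ t zn) zn < ε / 3 := by
      rw [hts]
      exact hκ r zn (by rw [abs_of_nonneg hr0]; linarith)
    have hd1 : dist (φ t zn) (φ t w) < ε / 3 :=
      hN1 n (le_max_left _ _)
    have hd3 : dist zn w < ε / 3 :=
      hN2 n (le_trans (le_max_left _ _) (le_max_right _ _))
    have : dist (φ t w) w < ε := by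
      calc dist (φ t w) w ≤ dist (φ t w) (φ t zn) + dist (φ t zn) zn + dist zn w :=
            dist_triangle4 _ _ _ _
      _ < ε / 3 + ε / 3 + ε / 3 := by rw [dist_comm (φ t w)]; linarith
      _ = ε := by ring
    exact lt_irrefl _ (hε ▸ this)
  obtain ⟨t0, ht0⟩ := hnofix w
  exact ht0 (hfix t0)

lemma flow_sep (hφcont : Continuous fun p : ℝ × M => φ p.1 p.2)
    {a b : ℝ} (hper : ∀ (z : M) (s : ℝ), a ≤ s → s ≤ b → φ s z ≠ z) :
    ∃ c > 0, ∀ (z : M) (s : ℝ), a ≤ s → s ≤ b → c ≤ dist (φ s z) z := by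
  by_contra h
  push_neg at h
  choose z s hsa hsb hd using fun n : ℕ => h (1 / (n + 1)) (by positivity)
  have hmem : ∀ n, (s n, z n) ∈ (Set.Icc a b ×ˢ (Set.univ : Set M)) :=
    fun n => ⟨⟨hsa n, hsb n⟩, trivial⟩
  obtain ⟨⟨s0, z0⟩, hmemK, g, hg, hlim⟩ :=
    (isCompact_Icc.prod isCompact_univ).tendsto_subseq hmem
  have hdist : Tendsto (fun n => dist (φ (s (g n)) (z (g n))) (z (g n))) atTop
      (𝓝 (dist (φ s0 z0) z0)) :=
    ((hφcont.dist continuous_snd).tendsto _).comp hlim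
  have hdist0 : Tendsto (fun n => dist (φ (s (g n)) (z (g n))) (z (g n))) atTop (𝓝 0) := by
    apply squeeze_zero (fun n => dist_nonneg) (fun n => le_of_lt (hd (g n)))
    apply squeeze_zero (fun n => by positivity) (g := fun n : ℕ => (1:ℝ)/(n+1))
      (fun n => ?_) tendsto_one_div_add_atTop_nhds_zero_nat
    have h1 : (n : ℝ) ≤ g n := (Nat.cast_le (α := ℝ)).mpr hg.le_apply
    apply one_div_le_one_div_of_le (by positivity) (by linarith)
  have : dist (φ s0 z0) z0 = 0 := tendsto_nhds_unique hdist hdist0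
  exact hper z0 s0 hmemK.1.1 hmemK.1.2 (dist_eq_zero.mp this)

lemma flow_unif (hφcont : Continuous fun p : ℝ × M => φ p.1 p.2) (μ : ℝ) :
    ∀ η > 0, ∃ d2 > 0, ∀ y y' : M, dist y y' < d2 → ∀ s : ℝ, 0 ≤ s → s ≤ μ →
      dist (φ (-s) y) (φ (-s) y') ≤ η := by
  intro η hη
  by_contra h
  push_neg at h
  choose y y' hyy s hs0 hsμ hfar using fun n : ℕ => h (1 / (n + 1)) (by positivity)
  have hmem : ∀ n, (s n, y n, y' n) ∈
      (Set.Icc (0:ℝ) μ ×ˢ ((Set.univ : Set M) ×ˢ (Set.univ : Set M))) :=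
    fun n => ⟨⟨hs0 n, hsμ n⟩, trivial, trivial⟩
  obtain ⟨⟨s0, y0, y0'⟩, -, g, hg, hlim⟩ :=
    (isCompact_Icc.prod (isCompact_univ.prod isCompact_univ)).tendsto_subseq hmem
  have hyy0 : y0 = y0' := by
    have h1 : Tendsto (fun n => dist (y (g n)) (y' (g n))) atTop (𝓝 (dist y0 y0')) :=
      (((continuous_fst.dist continuous_snd).tendsto _).comp
        ((continuous_snd.tendsto _).comp hlim))
    have h2 : Tendsto (fun n => dist (y (g n)) (y' (g n))) atTop (𝓝 0) := by
      apply squeeze_zero (fun n => dist_nonneg) (fun n => le_of_lt (hyy (g n)))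
      apply squeeze_zero (fun n => by positivity) (g := fun n : ℕ => (1:ℝ)/(n+1))
        (fun n => ?_) tendsto_one_div_add_atTop_nhds_zero_nat
      have h1 : (n : ℝ) ≤ g n := (Nat.cast_le (α := ℝ)).mpr hg.le_apply
      apply one_div_le_one_div_of_le (by positivity) (by linarith)
    exact dist_eq_zero.mp (tendsto_nhds_unique h1 h2)
  have hc3 : Continuous fun p : ℝ × M × M => dist (φ (-p.1) p.2.1) (φ (-p.1) p.2.2) :=
    (hφcont.comp ((continuous_fst.neg).prodMk (continuous_fst.comp continuous_snd))).dist
      (hφcont.comp ((continuous_fst.neg).prodMk (continuous_snd.comp continuous_snd)))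
  have h3 : Tendsto (fun n => dist (φ (-(s (g n))) (y (g n))) (φ (-(s (g n))) (y' (g n))))
      atTop (𝓝 (dist (φ (-s0) y0) (φ (-s0) y0'))) :=
    (hc3.tendsto _).comp hlim
  rw [hyy0, dist_self] at h3
  have : η ≤ 0 := ge_of_tendsto h3 (Eventually.of_forall fun n => le_of_lt (hfar (g n)))
  linarith

end Aux2

noncomputable section Whitney

open intervalIntegral MeasureTheory

/-- clipped bump profile -/
def bumpR (ρ d : ℝ) : ℝ := max 0 (min 1 ((3*ρ - d)/ρ))

lemma bumpR_nonneg (ρ d : ℝ) : 0 ≤ bumpR ρ d := le_max_left _ _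

lemma bumpR_le_one (ρ d : ℝ) : bumpR ρ d ≤ 1 :=
  max_le zero_le_one (min_le_left _ _)

lemma bumpR_one {ρ d : ℝ} (hρ : 0 < ρ) (h : d ≤ 2*ρ) : bumpR ρ d = 1 := by
  unfold bumpR
  have h1 : (1:ℝ) ≤ (3*ρ - d)/ρ := by rw [le_div_iff₀ hρ]; linarith
  rw [min_eq_left h1, max_eq_right zero_le_one]

lemma bumpR_zero {ρ d : ℝ} (hρ : 0 < ρ) (h : 3*ρ ≤ d) : bumpR ρ d = 0 := by
  unfold bumpR
  have h1 : (3*ρ - d)/ρ ≤ 0 := div_nonpos_of_nonpos_of_nonneg (by linarith) hρ.le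
  rw [min_eq_right (h1.trans zero_le_one), max_eq_left h1]

lemma bumpR_lip {ρ : ℝ} (hρ : 0 < ρ) (d d' : ℝ) :
    |bumpR ρ d - bumpR ρ d'| ≤ |d - d'| / ρ := by
  unfold bumpR
  set a := (3*ρ - d)/ρ with ha
  set b := (3*ρ - d')/ρ with hb
  calc |max 0 (min 1 a) - max 0 (min 1 b)|
      = |max (min 1 a) 0 - max (min 1 b) 0| := by rw [max_comm, max_comm (min 1 b)]
    _ ≤ |min 1 a - min 1 b| := abs_max_sub_max_le_abs _ _ _
    _ ≤ max |1 - 1| |a - b| := abs_min_sub_min_le_max _ _ _ _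
    _ = |a - b| := by simp
    _ = |d - d'| / ρ := by
        rw [ha, hb]
        rw [show (3*ρ - d)/ρ - (3*ρ - d')/ρ = (d' - d)/ρ by ring]
        rw [abs_div, abs_of_pos hρ, abs_sub_comm]

lemma bumpR_cont (ρ : ℝ) : Continuous fun d => bumpR ρ d := by
  unfold bumpR
  exact continuous_const.max (continuous_const.min
    ((continuous_const.sub continuous_id).div_const ρ))

end Whitney

noncomputable section Whitney2

open intervalIntegral MeasureTheory

variable {M : Type*} [MetricSpace M] [CompactSpace M] (φ : ℝ → M → M)

/-- Whitney-type time function -/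
def FW (ρ μ : ℝ) (x : M) (y : M) : ℝ := ∫ s in (0:ℝ)..μ, bumpR ρ (dist (φ (-s) y) x)

lemma FW_integrand_cont (ρ : ℝ) (x z : M)
    (hφcont : Continuous fun p : ℝ × M => φ p.1 p.2) :
    Continuous fun r : ℝ => bumpR ρ (dist (φ r z) x) :=
  (bumpR_cont ρ).comp (((hφcont.comp (continuous_id.prodMk continuous_const))).dist
    continuous_const)

lemma FW_integrable (ρ : ℝ) (x z : M)
    (hφcont : Continuous fun p : ℝ × M => φ p.1 p.2) (a b : ℝ) :
    IntervalIntegrable (fun r : ℝ => bumpR ρ (dist (φ r z) x)) volume a b :=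
  (FW_integrand_cont φ ρ x z hφcont).intervalIntegrable a b

lemma FW_eq (ρ μ : ℝ) (x z : M)
    (hφcont : Continuous fun p : ℝ × M => φ p.1 p.2) :
    FW φ ρ μ x z = ∫ r in (-μ)..(0:ℝ), bumpR ρ (dist (φ r z) x) := by
  have h := intervalIntegral.integral_comp_neg (a := (0:ℝ)) (b := μ)
    (fun r : ℝ => bumpR ρ (dist (φ r z) x))
  simp only [neg_zero] at h
  exact h

/-- The key increase identity. -/
lemma FW_key {ρ μ c κ₀ κ : ℝ} (hρ : ρ = c/4) (hc : 0 < c) (hμ : 0 < μ)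
    (hφcont : Continuous fun p : ℝ × M => φ p.1 p.2)
    (hφ0 : ∀ x, φ 0 x = x) (hφadd : ∀ t s x, φ (t + s) x = φ t (φ s x))
    (hcsep : ∀ (z : M) (s : ℝ), μ/2 ≤ s → s ≤ μ → c ≤ dist (φ s z) z)
    (hκ₀ : ∀ (r : ℝ) (w : M), |r| ≤ κ₀ → dist (φ r w) w < ρ/2)
    (hκκ₀ : 2*κ ≤ κ₀) (hκμ : 2*κ ≤ μ/4) (hκpos : 0 < κ)
    (x : M) (z : M) (hz : dist z x < ρ) (t : ℝ) (ht0 : 0 ≤ t) (ht2 : t ≤ 2*κ) :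
    FW φ ρ μ x (φ t z) = FW φ ρ μ x z + t := by
  have hρpos : 0 < ρ := by rw [hρ]; linarith
  have htμ : t ≤ μ := by linarith
  have h1 : FW φ ρ μ x (φ t z) = ∫ r in (t - μ)..t, bumpR ρ (dist (φ r z) x) := by
    unfold FW
    have heq : Set.EqOn (fun s : ℝ => bumpR ρ (dist (φ (-s) (φ t z)) x))
        (fun s : ℝ => (fun r : ℝ => bumpR ρ (dist (φ r z) x)) (t - s)) (Set.uIcc 0 μ) := by
      intro s _
      simp only
      congr 2
      calc φ (-s) (φ t z) = φ (-s + t) z := (hφadd _ _ _).symm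
        _ = φ (t - s) z := by rw [neg_add_eq_sub]
    rw [intervalIntegral.integral_congr heq,
      intervalIntegral.integral_comp_sub_left (fun r : ℝ => bumpR ρ (dist (φ r z) x)) t,
      sub_zero]
  have h2 := FW_eq φ ρ μ x z hφcont
  have I1 := intervalIntegral.integral_add_adjacent_intervals
    (FW_integrable φ ρ x z hφcont (t - μ) 0) (FW_integrable φ ρ x z hφcont 0 t)
  have I2 := intervalIntegral.integral_add_adjacent_intervals
    (FW_integrable φ ρ x z hφcont (-μ) (t - μ)) (FW_integrable φ ρ x z hφcont (t - μ) 0)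
  have hIone : (∫ r in (0:ℝ)..t, bumpR ρ (dist (φ r z) x)) = t := by
    have heq : Set.EqOn (fun r : ℝ => bumpR ρ (dist (φ r z) x)) (fun _ => (1:ℝ))
        (Set.uIcc 0 t) := by
      intro r hr
      rw [Set.uIcc_of_le ht0] at hr
      simp only
      apply bumpR_one hρpos
      have hmv : dist (φ r z) z < ρ/2 := hκ₀ r z (by rw [abs_of_nonneg hr.1]; linarith [hr.2])
      calc dist (φ r z) x ≤ dist (φ r z) z + dist z x := dist_triangle _ _ _
        _ ≤ 2*ρ := by linarith
    rw [intervalIntegral.integral_congr heq, intervalIntegral.integral_const, smul_eq_mul]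
    ring
  have hIzero : (∫ r in (-μ)..(t - μ), bumpR ρ (dist (φ r z) x)) = 0 := by
    have heq : Set.EqOn (fun r : ℝ => bumpR ρ (dist (φ r z) x)) (fun _ => (0:ℝ))
        (Set.uIcc (-μ) (t - μ)) := by
      intro r hr
      rw [Set.uIcc_of_le (by linarith : -μ ≤ t - μ)] at hr
      simp only
      apply bumpR_zero hρpos
      have hrange1 : μ/2 ≤ -r := by linarith [hr.2]
      have hrange2 : -r ≤ μ := by linarith [hr.1]
      have hper : φ (-r) (φ r z) = z := by rw [← hφadd, neg_add_cancel, hφ0]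
      have hsep : c ≤ dist (φ (-r) (φ r z)) (φ r z) := hcsep (φ r z) (-r) hrange1 hrange2
      rw [hper, dist_comm] at hsep
      have htr : dist (φ r z) z ≤ dist (φ r z) x + dist x z := dist_triangle _ _ _
      have hxz : dist x z = dist z x := dist_comm _ _
      have : 3*ρ ≤ dist (φ r z) x := by
        rw [hρ] at *
        linarith
      linarith
    rw [intervalIntegral.integral_congr heq, intervalIntegral.integral_zero]
  rw [h1, h2, ← I1, ← I2, hIone, hIzero]
  ring

/-- Lipschitz-type estimate for FW differences. -/
lemma FW_diff {ρ μ : ℝ} (hρpos : 0 < ρ) (hμ : 0 < μ)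
    (hφcont : Continuous fun p : ℝ × M => φ p.1 p.2)
    (x : M) (y y' : M) (η : ℝ) (hη : 0 ≤ η)
    (hclose : ∀ s : ℝ, 0 ≤ s → s ≤ μ → dist (φ (-s) y) (φ (-s) y') ≤ η) :
    |FW φ ρ μ x y - FW φ ρ μ x y'| ≤ η/ρ * μ := by
  unfold FW
  have hint1 : IntervalIntegrable (fun s : ℝ => bumpR ρ (dist (φ (-s) y) x)) volume 0 μ := by
    have := (FW_integrable φ ρ x y hφcont (-μ) 0)
    have hcont : Continuous fun s : ℝ => bumpR ρ (dist (φ (-s) y) x) :=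
      (bumpR_cont ρ).comp (((hφcont.comp (continuous_neg.prodMk continuous_const))).dist
        continuous_const)
    exact hcont.intervalIntegrable 0 μ
  have hint2 : IntervalIntegrable (fun s : ℝ => bumpR ρ (dist (φ (-s) y') x)) volume 0 μ := by
    have hcont : Continuous fun s : ℝ => bumpR ρ (dist (φ (-s) y') x) :=
      (bumpR_cont ρ).comp (((hφcont.comp (continuous_neg.prodMk continuous_const))).dist
        continuous_const)
    exact hcont.intervalIntegrable 0 μ
  rw [← intervalIntegral.integral_sub hint1 hint2]
  have hbd : ∀ s ∈ Set.uIoc (0:ℝ) μ,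
      ‖bumpR ρ (dist (φ (-s) y) x) - bumpR ρ (dist (φ (-s) y') x)‖ ≤ η/ρ := by
    intro s hs
    rw [Set.uIoc_of_le hμ.le] at hs
    calc ‖bumpR ρ (dist (φ (-s) y) x) - bumpR ρ (dist (φ (-s) y') x)‖
        ≤ |dist (φ (-s) y) x - dist (φ (-s) y') x| / ρ := bumpR_lip hρpos _ _
      _ ≤ dist (φ (-s) y) (φ (-s) y') / ρ := by
          gcongr
          exact abs_dist_sub_le _ _ _
      _ ≤ η/ρ := by gcongr; exact hclose s hs.1.le hs.2
  have := intervalIntegral.norm_integral_le_of_norm_le_const hbd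
  rw [Real.norm_eq_abs] at this
  calc |∫ s in (0:ℝ)..μ, (bumpR ρ (dist (φ (-s) y) x) - bumpR ρ (dist (φ (-s) y') x))|
      ≤ η/ρ * |μ - 0| := this
    _ = η/ρ * μ := by rw [sub_zero, abs_of_pos hμ]

end Whitney2


/-- Constants `μ ∈ (0, ε₀/3)` and `δ > 0` such that any continuous curve
in `B_δ(x)` starting at `x` and contained in the orbit of `x` stays in `φ_{[−μ,μ]}(x)`. -/
theorem stmt_9 {M : Type*} [MetricSpace M] [CompactSpace M]
    (φ : ℝ → M → M)
    (hφcont : Continuous fun p : ℝ × M => φ p.1 p.2)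
    (hφ0 : ∀ x, φ 0 x = x)
    (hφadd : ∀ t s x, φ (t + s) x = φ t (φ s x))
    (hnofix : ∀ x : M, ∃ t : ℝ, φ t x ≠ x)
    (ε₀ : ℝ)
    (hε₀ : ε₀ = sInf ({τ : ℝ | 0 < τ ∧ ∃ x : M, φ τ x = x ∧ ∀ t ∈ Set.Ioo 0 τ, φ t x ≠ x}
      ∪ {1})) :
    ∃ μ ∈ Set.Ioo 0 (ε₀ / 3), ∃ δ > 0, ∀ x : M, ∀ α : ℝ → M,
      ContinuousOn α (Set.Icc 0 1) →
      (∀ t ∈ Set.Icc (0:ℝ) 1, α t ∈ Metric.ball x δ) →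
      α 0 = x →
      (∀ t ∈ Set.Icc (0:ℝ) 1, ∃ s : ℝ, φ s x = α t) →
      ∀ t ∈ Set.Icc (0:ℝ) 1, ∃ s ∈ Set.Icc (-μ) μ, φ s x = α t := by
  classical
  obtain ⟨m, hm, hmno⟩ := flow_no_small_periods φ hφcont hφ0 hφadd hnofix
  set Sper := {τ : ℝ | 0 < τ ∧ ∃ x : M, φ τ x = x ∧ ∀ t ∈ Set.Ioo 0 τ, φ t x ≠ x} with hSper
  have hbdd : BddBelow (Sper ∪ {1}) := by
    refine ⟨0, ?_⟩
    rintro τ (⟨h1, -⟩ | h1)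
    · exact h1.le
    · simp only [Set.mem_singleton_iff] at h1
      rw [h1]; norm_num
  have hne : (Sper ∪ {1}).Nonempty := ⟨1, Or.inr rfl⟩
  have hlb : ∀ τ ∈ Sper ∪ {1}, min m 1 ≤ τ := by
    rintro τ (⟨hτ0, z, hz, -⟩ | hτ)
    · by_contra hlt
      push_neg at hlt
      exact hmno z τ hτ0 (le_of_lt (lt_of_lt_of_le hlt (min_le_left _ _))) hz
    · simp only [Set.mem_singleton_iff] at hτ
      rw [hτ]; exact min_le_right _ _
  have hε₀pos : 0 < ε₀ := by
    rw [hε₀]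
    exact lt_of_lt_of_le (lt_min hm one_pos) (le_csInf hne hlb)
  have hnoper : ∀ (z : M) (s : ℝ), 0 < s → s < ε₀ → φ s z ≠ z := by
    intro z s hs0 hsε hz
    obtain ⟨p, hp0, hps, hpz, hpmin⟩ := flow_minper φ hφcont hφ0 hφadd hs0 hz (hnofix z)
    have hpS : p ∈ Sper ∪ {1} := Or.inl ⟨hp0, z, hpz, hpmin⟩
    have : ε₀ ≤ p := hε₀ ▸ csInf_le hbdd hpS
    linarith
  set μ := ε₀ / 6 with hμdef
  have hμpos : 0 < μ := by rw [hμdef]; linarith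
  obtain ⟨c, hcpos, hcsep⟩ := flow_sep φ hφcont (a := μ/2) (b := μ)
    (fun z s h1 h2 => hnoper z s (by linarith) (by rw [hμdef] at h2; linarith))
  set ρ := c / 4 with hρdef
  have hρpos : 0 < ρ := by rw [hρdef]; linarith
  obtain ⟨κ₀, hκ₀pos, hκ₀⟩ := flow_small φ hφcont hφ0 (ρ/2) (by linarith)
  set κ := min (κ₀/2) (μ/8) with hκdef
  have hκpos : 0 < κ := lt_min (by linarith) (by linarith)
  have hκκ₀ : 2*κ ≤ κ₀ := by
    have := min_le_left (κ₀/2) (μ/8); rw [← hκdef] at this; linarith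
  have hκμ : 2*κ ≤ μ/4 := by
    have := min_le_right (κ₀/2) (μ/8); rw [← hκdef] at this; linarith
  have hκμ' : κ ≤ μ := by linarith
  obtain ⟨d2, hd2pos, hd2⟩ := flow_unif φ hφcont μ (ρ*κ/μ) (by positivity)
  set δ := min d2 (ρ/2) with hδdef
  have hδpos : 0 < δ := lt_min hd2pos (by linarith)
  refine ⟨μ, ⟨hμpos, by rw [hμdef]; linarith⟩, δ, hδpos, ?_⟩
  intro x α hαcont hαball hα0 hαorb
  set F : M → ℝ := FW φ ρ μ x with hFdef
  have hFkey : ∀ z : M, dist z x < ρ → ∀ t : ℝ, 0 ≤ t → t ≤ 2*κ → F (φ t z) = F z + t :=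
    fun z hz t ht0 ht2 =>
      FW_key φ hρdef hcpos hμpos hφcont hφ0 hφadd hcsep hκ₀ hκκ₀ hκμ hκpos x z hz t ht0 ht2
  have hFcont : Continuous F := by
    rw [Metric.continuous_iff]
    intro y ε hε
    obtain ⟨d3, hd3pos, hd3⟩ := flow_unif φ hφcont μ (ρ*ε/(2*μ)) (by positivity)
    refine ⟨d3, hd3pos, fun y' hy' => ?_⟩
    have hest := FW_diff φ hρpos hμpos hφcont x y' y (ρ*ε/(2*μ)) (by positivity)
      (fun s h1 h2 => hd3 y' y hy' s h1 h2)
    rw [Real.dist_eq, hFdef]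
    calc |FW φ ρ μ x y' - FW φ ρ μ x y| ≤ (ρ*ε/(2*μ))/ρ * μ := hest
      _ = ε/2 := by field_simp
      _ < ε := by linarith
  have hFnear : ∀ y : M, dist y x < δ → |F y - F x| ≤ κ := by
    intro y hy
    have hest := FW_diff φ hρpos hμpos hφcont x y x (ρ*κ/μ) (by positivity)
      (fun s h1 h2 => hd2 y x (lt_of_lt_of_le hy (min_le_left _ _)) s h1 h2)
    rw [hFdef]
    calc |FW φ ρ μ x y - FW φ ρ μ x x| ≤ (ρ*κ/μ)/ρ * μ := hest
      _ = κ := by field_simp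
  set u : ℝ → ℝ := fun t => F x - F (α t) with hu
  set ζ : ℝ → M := fun t => φ (u t) (α t) with hζ
  have hδρ : δ ≤ ρ/2 := min_le_right _ _
  have hαx : ∀ t ∈ Set.Icc (0:ℝ) 1, dist (α t) x < δ :=
    fun t ht => Metric.mem_ball.mp (hαball t ht)
  have huκ : ∀ t ∈ Set.Icc (0:ℝ) 1, |u t| ≤ κ := by
    intro t ht
    rw [hu]
    simp only
    rw [abs_sub_comm]
    exact hFnear _ (hαx t ht)
  have hζx : ∀ t ∈ Set.Icc (0:ℝ) 1, dist (ζ t) x < ρ := by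
    intro t ht
    have h1 : dist (φ (u t) (α t)) (α t) < ρ/2 :=
      hκ₀ _ _ (le_trans (huκ t ht) (by linarith))
    have h2 := hαx t ht
    calc dist (ζ t) x ≤ dist (φ (u t) (α t)) (α t) + dist (α t) x := dist_triangle _ _ _
      _ < ρ/2 + ρ/2 := by
          apply add_lt_add h1 (lt_of_lt_of_le h2 hδρ)
      _ = ρ := by ring
  have hζF : ∀ t ∈ Set.Icc (0:ℝ) 1, F (ζ t) = F x := by
    intro t ht
    have habs := huκ t ht
    rcases le_or_gt 0 (u t) with h | h
    · have hbase : dist (α t) x < ρ := lt_of_lt_of_le (hαx t ht) (by linarith)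
      have hkey := hFkey (α t) hbase (u t) h
        (le_trans (le_abs_self _) (by linarith))
      rw [hζ]
      simp only
      rw [hkey, hu]
      simp only
      ring
    · have hbase : dist (ζ t) x < ρ := hζx t ht
      have hback : φ (-(u t)) (ζ t) = α t := by
        rw [hζ]
        simp only
        rw [← hφadd, neg_add_cancel, hφ0]
      have hnu : -(u t) ≤ 2*κ := by
        have := neg_le_abs (u t)
        linarith
      have hkey := hFkey (ζ t) hbase (-(u t)) (by linarith) hnu
      rw [hback] at hkey
      have hut : u t = F x - F (α t) := by rw [hu]
      linarith
  set D : Set ℝ := {b : ℝ | φ b x ∈ Metric.ball x ρ ∧ F (φ b x) = F x} with hD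
  have hζE : ∀ t ∈ Set.Icc (0:ℝ) 1, ζ t ∈ (fun b => φ b x) '' D := by
    intro t ht
    obtain ⟨s, hs⟩ := hαorb t ht
    have heq : φ (u t + s) x = ζ t := by
      rw [hφadd, hs, hζ]
    refine ⟨u t + s, ⟨?_, ?_⟩, heq⟩
    · rw [heq]; exact Metric.mem_ball.mpr (hζx t ht)
    · rw [heq]; exact hζF t ht
  have hDsep : ∀ b ∈ D, ∀ b' ∈ D, |b - b'| < 2*κ → b = b' := by
    have key : ∀ b ∈ D, ∀ b' ∈ D, b ≤ b' → b' - b ≤ 2*κ → b = b' := by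
      intro b hb b' hb' hle hdiff
      have h1 : φ b' x = φ (b' - b) (φ b x) := by
        rw [← hφadd]
        congr 1
        ring
      have h2 := hFkey (φ b x) (Metric.mem_ball.mp hb.1) (b' - b) (by linarith) hdiff
      rw [← h1, hb.2, hb'.2] at h2
      linarith
    intro b hb b' hb' habs
    rcases le_total b b' with h | h
    · exact key b hb b' hb' h (by rw [abs_sub_comm] at habs; rw [abs_of_nonneg (by linarith)] at habs; linarith)
    · exact (key b' hb' b hb h (by rw [abs_of_nonneg (by linarith)] at habs; linarith)).symm
  have hDcnt : Set.Countable D := by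
    have hsub : D ⊆ ⋃ k : ℤ, D ∩ Set.Ico ((k:ℝ) * (2*κ)) (((k:ℝ)+1) * (2*κ)) := by
      intro b hb
      refine Set.mem_iUnion.mpr ⟨⌊b/(2*κ)⌋, hb, ?_, ?_⟩
      · have := Int.floor_le (b/(2*κ))
        calc (⌊b/(2*κ)⌋:ℝ) * (2*κ) ≤ (b/(2*κ)) * (2*κ) := by nlinarith
          _ = b := by field_simp
      · have := Int.lt_floor_add_one (b/(2*κ))
        calc b = (b/(2*κ)) * (2*κ) := by field_simp
          _ < ((⌊b/(2*κ)⌋:ℝ)+1) * (2*κ) := by nlinarith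
    apply Set.Countable.mono hsub
    apply Set.countable_iUnion
    intro k
    apply Set.Subsingleton.countable
    intro b hb b' hb'
    apply hDsep b hb.1 b' hb'.1
    rw [abs_sub_lt_iff]
    constructor <;> nlinarith [hb.2.1, hb.2.2, hb'.2.1, hb'.2.2]
  have hEcnt : Set.Countable ((fun b => φ b x) '' D) := hDcnt.image _
  have hζcont : ContinuousOn ζ (Set.Icc (0:ℝ) 1) := by
    simp only [hζ, hu]
    have h1 : ContinuousOn (fun t => (F x - F (α t), α t)) (Set.Icc (0:ℝ) 1) :=
      (continuousOn_const.sub (hFcont.comp_continuousOn hαcont)).prodMk hαcont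
    exact hφcont.comp_continuousOn h1
  have hζ0 : ζ 0 = x := by
    rw [hζ]
    simp only
    rw [hu]
    simp only
    rw [hα0, sub_self, hφ0]
  have hζconst : ∀ t ∈ Set.Icc (0:ℝ) 1, ζ t = x := by
    intro t ht
    by_contra hne
    set q := dist (ζ 0) (ζ t) with hq
    have hqpos : 0 < q := by
      rw [hq, hζ0]
      exact dist_pos.mpr (Ne.symm hne)
    have hIcc : Set.Icc (0:ℝ) t ⊆ Set.Icc 0 1 := Set.Icc_subset_Icc le_rfl ht.2
    have hhcont : ContinuousOn (fun t' => dist (ζ 0) (ζ t')) (Set.Icc 0 t) :=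
      (continuous_const.dist continuous_id).comp_continuousOn (hζcont.mono hIcc)
    have hIVT := intermediate_value_Icc ht.1 hhcont
    have hsub2 : Set.Icc 0 q ⊆ (fun t' => dist (ζ 0) (ζ t')) '' (Set.Icc 0 t) := by
      have h0 : dist (ζ 0) (ζ 0) = 0 := dist_self _
      rw [hq]
      calc Set.Icc 0 (dist (ζ 0) (ζ t))
          = Set.Icc (dist (ζ 0) (ζ 0)) (dist (ζ 0) (ζ t)) := by rw [h0]
        _ ⊆ _ := hIVT
    have himg : (fun t' => dist (ζ 0) (ζ t')) '' (Set.Icc 0 t) ⊆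
        (fun e => dist (ζ 0) e) '' ((fun b => φ b x) '' D) := by
      rintro v ⟨t', ht', rfl⟩
      exact ⟨ζ t', hζE t' (hIcc ht'), rfl⟩
    have hcnt : (Set.Icc (0:ℝ) q).Countable :=
      Set.Countable.mono (hsub2.trans himg) (hEcnt.image _)
    have hmz := hcnt.measure_zero MeasureTheory.volume
    rw [Real.volume_Icc, sub_zero, ENNReal.ofReal_eq_zero] at hmz
    linarith
  intro t ht
  refine ⟨-(u t), ?_, ?_⟩
  · have habs := abs_le.mp (le_trans (huκ t ht) hκμ')
    exact Set.mem_Icc.mpr ⟨by linarith [habs.2], by linarith [habs.1]⟩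
  · have h1 : φ (-(u t)) (ζ t) = α t := by
      rw [hζ]
      simp only
      rw [← hφadd, neg_add_cancel, hφ0]
    rw [← hζconst t ht]
    exact h1
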